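/- Let ũ, ṽ : ℝ² → ℝ be continuously differentiable functions satisfying the potential system of the Burgers equation: ∂_x ṽ = ũ and ∂_t ṽ = ∂_x ũ + ũ² at every point of ℝ². Define u := ũ·e^{ṽ} and v := e^{ṽ}. Then ∂_x v = u and ∂_t v = ∂_x u at every point of ℝ², i.e. (u, v) satisfies the potential system of the linear heat equation. (The Cole–Hopf-type transformation t = t̃, x = x̃, u = ũe^{ṽ}, v = e^{ṽ} maps the potential system of the Burgers equation to that of the linear heat equation.) -/

import Mathlib

/-- Partial derivative with respect to the first (time) variable. -/
noncomputable def pT (f : ℝ → ℝ → ℝ) (t x : ℝ) : ℝ := deriv (fun s => f s x) t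

/-- Partial derivative with respect to the second (space) variable. -/
noncomputable def pX (f : ℝ → ℝ → ℝ) (t x : ℝ) : ℝ := deriv (fun y => f t y) x

/-- The Cole–Hopf-type transformation `u = ũ e^ṽ`, `v = e^ṽ` maps the potential system
`ṽ_x = ũ`, `ṽ_t = ũ_x + ũ²` of the Burgers equation to the potential system
`v_x = u`, `v_t = u_x` of the linear heat equation. -/
theorem cole_hopf_potential_systems
    (ut vt : ℝ → ℝ → ℝ)
    (hut : ContDiff ℝ 1 (fun p : ℝ × ℝ => ut p.1 p.2))
    (hvt : ContDiff ℝ 1 (fun p : ℝ × ℝ => vt p.1 p.2))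
    (hvx : ∀ t x : ℝ, pX vt t x = ut t x)
    (hvtt : ∀ t x : ℝ, pT vt t x = pX ut t x + (ut t x) ^ 2)
    (u v : ℝ → ℝ → ℝ)
    (hu : u = fun t x => ut t x * Real.exp (vt t x))
    (hv : v = fun t x => Real.exp (vt t x)) :
    ∀ t x : ℝ, pX v t x = u t x ∧ pT v t x = pX u t x := by
  intro t x
  -- slice differentiabilities
  have hvtd := hvt.differentiable one_ne_zero
  have hutd := hut.differentiable one_ne_zero
  have hXmap : Differentiable ℝ (fun y : ℝ => ((t, y) : ℝ × ℝ)) :=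
    (differentiable_const t).prodMk differentiable_id
  have hTmap : Differentiable ℝ (fun s : ℝ => ((s, x) : ℝ × ℝ)) :=
    differentiable_id.prodMk (differentiable_const x)
  have dvX : DifferentiableAt ℝ (fun y => vt t y) x := (hvtd.comp hXmap) x
  have dvT : DifferentiableAt ℝ (fun s => vt s x) t := (hvtd.comp hTmap) t
  have duX : DifferentiableAt ℝ (fun y => ut t y) x := (hutd.comp hXmap) x
  -- HasDerivAt statements
  have hVx : HasDerivAt (fun y => vt t y) (ut t x) x := by
    have := dvX.hasDerivAt
    rwa [show deriv (fun y => vt t y) x = ut t x from hvx t x] at this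
  have hVt : HasDerivAt (fun s => vt s x) (pX ut t x + (ut t x) ^ 2) t := by
    have := dvT.hasDerivAt
    rwa [show deriv (fun s => vt s x) t = pX ut t x + (ut t x) ^ 2 from hvtt t x] at this
  have hUx : HasDerivAt (fun y => ut t y) (pX ut t x) x := duX.hasDerivAt
  have hVexp : HasDerivAt (fun y => Real.exp (vt t y)) (Real.exp (vt t x) * ut t x) x :=
    hVx.exp
  have hVexpT : HasDerivAt (fun s => Real.exp (vt s x))
      (Real.exp (vt t x) * (pX ut t x + (ut t x) ^ 2)) t := hVt.exp
  have hUmul : HasDerivAt (fun y => ut t y * Real.exp (vt t y))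
      (pX ut t x * Real.exp (vt t x) + ut t x * (Real.exp (vt t x) * ut t x)) x :=
    hUx.mul hVexp
  subst hu hv
  constructor
  · rw [pX, hVexp.deriv]; ring
  · rw [pT, pX, hVexpT.deriv, hUmul.deriv]
    ring
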